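/- Let Σ^h be an n×n Hermitian PSD matrix, X ∈ ℂ^{n×t}, Ψ ∈ ℂ^{t×q}. Define Σ_y = Ψ^H X^H Σ^h X Ψ + Ψ^H Ψ + I. Then the analog-feedback MSE D = Tr(Σ^h − Σ^h X Ψ Σ_y^{-1} Ψ^H X^H Σ^h) satisfies D = Tr(Λ(I + G)^{-1}), where Σ^h = UΛU^H is the reduced eigendecomposition (U ∈ ℂ^{n×r} orthonormal columns, Λ diagonal positive) and G = Λ^{1/2} U^H X Ψ(Ψ^HΨ + I)^{-1}Ψ^H X^H U Λ^{1/2}. -/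

import Mathlib

open Matrix
open scoped ComplexOrder

set_option maxHeartbeats 1000000 in
/-- The analog-feedback MSE
`D = Tr(Σ − Σ X Ψ Σ_y⁻¹ Ψᴴ Xᴴ Σ)` with `Σ_y = Ψᴴ Xᴴ Σ X Ψ + ΨᴴΨ + I` equals
`Tr(Λ(I+G)⁻¹)` where `Σ = UΛUᴴ` (reduced eigendecomposition) and
`G = Λ^{1/2} Uᴴ X Ψ(ΨᴴΨ + I)⁻¹Ψᴴ Xᴴ U Λ^{1/2}`. -/
theorem analog_feedback_mse_reduction (n t q r : ℕ)
    (Sig : Matrix (Fin n) (Fin n) ℂ) (hSig : Sig.PosSemidef)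
    (X : Matrix (Fin n) (Fin t) ℂ) (Ψ : Matrix (Fin t) (Fin q) ℂ)
    (U : Matrix (Fin n) (Fin r) ℂ) (hU : Uᴴ * U = 1)
    (lam : Fin r → ℝ) (hlam : ∀ i, 0 < lam i)
    (hdecomp : Sig = U * Matrix.diagonal (fun i => (lam i : ℂ)) * Uᴴ) :
    let Sy : Matrix (Fin q) (Fin q) ℂ := Ψᴴ * Xᴴ * Sig * X * Ψ + Ψᴴ * Ψ + 1
    let L12 : Matrix (Fin r) (Fin r) ℂ := Matrix.diagonal (fun i => (Real.sqrt (lam i) : ℂ))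
    let G : Matrix (Fin r) (Fin r) ℂ :=
      L12 * Uᴴ * X * Ψ * (Ψᴴ * Ψ + 1)⁻¹ * Ψᴴ * Xᴴ * U * L12
    let Λ : Matrix (Fin r) (Fin r) ℂ := Matrix.diagonal (fun i => (lam i : ℂ))
    (Sig - Sig * X * Ψ * Sy⁻¹ * Ψᴴ * Xᴴ * Sig).trace = (Λ * (1 + G)⁻¹).trace := by
  intro Sy L12 G Λ
  set W : Matrix (Fin r) (Fin q) ℂ := Uᴴ * X * Ψ with hW
  set M : Matrix (Fin q) (Fin q) ℂ := Ψᴴ * Ψ + 1 with hM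
  have hΛ : Λ = Matrix.diagonal (fun i => (lam i : ℂ)) := rfl
  have hL12def : L12 = Matrix.diagonal (fun i => (Real.sqrt (lam i) : ℂ)) := rfl
  have hSydef : Sy = Ψᴴ * Xᴴ * Sig * X * Ψ + Ψᴴ * Ψ + 1 := rfl
  have hGdef : G = L12 * Uᴴ * X * Ψ * (Ψᴴ * Ψ + 1)⁻¹ * Ψᴴ * Xᴴ * U * L12 := rfl
  clear_value W M Sy L12 G Λ
  -- facts about L12 and Λ
  have hL12H : L12ᴴ = L12 := by
    rw [hL12def, Matrix.diagonal_conjTranspose]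
    refine congrArg _ (funext fun i => ?_)
    simp [Complex.conj_ofReal]
  have hLL : L12 * L12 = Λ := by
    rw [hL12def, hΛ, Matrix.diagonal_mul_diagonal]
    refine congrArg _ (funext fun i => ?_)
    rw [← Complex.ofReal_mul, Real.mul_self_sqrt (hlam i).le]
  -- positive definiteness facts
  have hMpd : M.PosDef := by
    rw [hM]
    exact Matrix.PosDef.posSemidef_add (Matrix.posSemidef_conjTranspose_mul_self Ψ)
      Matrix.PosDef.one
  have hMinv : M⁻¹ * M = 1 :=
    Matrix.nonsing_inv_mul M ((Matrix.isUnit_iff_isUnit_det M).mp hMpd.isUnit)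
  have hSyPD : Sy.PosDef := by
    rw [hSydef, add_assoc]
    have h1 : (Ψᴴ * Xᴴ * Sig * X * Ψ).PosSemidef := by
      have := hSig.conjTranspose_mul_mul_same (X * Ψ)
      simpa only [Matrix.conjTranspose_mul, Matrix.mul_assoc] using this
    rw [← hM]
    exact Matrix.PosDef.posSemidef_add h1 hMpd
  have hSyinv : Sy * Sy⁻¹ = 1 :=
    Matrix.mul_nonsing_inv Sy ((Matrix.isUnit_iff_isUnit_det Sy).mp hSyPD.isUnit)
  -- rewrite Sy and G in terms of W and M
  have hSy : Sy = Wᴴ * Λ * W + M := by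
    rw [hSydef, hW, hM, hΛ, hdecomp, add_assoc]
    congr 1
    simp only [Matrix.conjTranspose_mul, Matrix.conjTranspose_conjTranspose, Matrix.mul_assoc]
  have hG : G = L12 * W * M⁻¹ * Wᴴ * L12 := by
    rw [hGdef, hW, hM]
    simp only [Matrix.conjTranspose_mul, Matrix.conjTranspose_conjTranspose, Matrix.mul_assoc]
  -- 1 + G is positive definite, hence invertible
  have hGpsd : G.PosSemidef := by
    rw [hG]
    have : (L12 * W * M⁻¹ * (L12 * W)ᴴ).PosSemidef :=
      (hMpd.inv.posSemidef).mul_mul_conjTranspose_same (L12 * W)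
    simpa only [Matrix.conjTranspose_mul, hL12H, Matrix.mul_assoc] using this
  have hIGpd : (1 + G).PosDef := Matrix.PosDef.add_posSemidef Matrix.PosDef.one hGpsd
  have hIGinv : (1 + G)⁻¹ * (1 + G) = 1 :=
    Matrix.nonsing_inv_mul _ ((Matrix.isUnit_iff_isUnit_det _).mp hIGpd.isUnit)
  -- key identity: L12 W Sy⁻¹ Wᴴ L12 = (1+G)⁻¹ G
  have hc : M * Sy⁻¹ + Wᴴ * Λ * W * Sy⁻¹ = 1 := by
    rw [← Matrix.add_mul, add_comm, ← hSy, hSyinv]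
  have h1 : (1 + G) * (L12 * W * Sy⁻¹ * Wᴴ * L12) = G := by
    have hKa : L12 * W * Sy⁻¹ * Wᴴ * L12 = L12 * W * (M⁻¹ * (M * Sy⁻¹)) * Wᴴ * L12 := by
      rw [← Matrix.mul_assoc M⁻¹ M Sy⁻¹, hMinv, Matrix.one_mul]
    have hGK : G * (L12 * W * Sy⁻¹ * Wᴴ * L12)
        = L12 * W * (M⁻¹ * (Wᴴ * Λ * W * Sy⁻¹)) * Wᴴ * L12 := by
      rw [hG, ← hLL]
      simp only [Matrix.mul_assoc]
    rw [Matrix.add_mul, Matrix.one_mul, hGK]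
    nth_rewrite 1 [hKa]
    have hdistrib : L12 * W * (M⁻¹ * (M * Sy⁻¹)) * Wᴴ * L12
          + L12 * W * (M⁻¹ * (Wᴴ * Λ * W * Sy⁻¹)) * Wᴴ * L12
        = L12 * W * (M⁻¹ * (M * Sy⁻¹ + Wᴴ * Λ * W * Sy⁻¹)) * Wᴴ * L12 := by
      simp only [Matrix.mul_add, Matrix.add_mul]
    rw [hdistrib, hc, Matrix.mul_one, hG]
  have hkey : L12 * W * Sy⁻¹ * Wᴴ * L12 = (1 + G)⁻¹ * G := by
    have h2 := congrArg (fun Z => (1 + G)⁻¹ * Z) h1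
    rw [← Matrix.mul_assoc ((1 + G)⁻¹) (1 + G) (L12 * W * Sy⁻¹ * Wᴴ * L12), hIGinv,
      Matrix.one_mul] at h2
    exact h2
  -- trace computations
  have hSXP : Sig * X * Ψ = U * (Λ * W) := by
    rw [hdecomp, hW, hΛ]
    simp only [Matrix.mul_assoc]
  have hPXS : Ψᴴ * Xᴴ * Sig = Wᴴ * Λ * Uᴴ := by
    rw [hdecomp, hW, hΛ]
    simp only [Matrix.conjTranspose_mul, Matrix.conjTranspose_conjTranspose, Matrix.mul_assoc]
  have htr1 : Sig.trace = Λ.trace := by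
    rw [hdecomp, Matrix.trace_mul_comm, ← Matrix.mul_assoc, hU, Matrix.one_mul, hΛ]
  have htr2 : (Sig * X * Ψ * Sy⁻¹ * Ψᴴ * Xᴴ * Sig).trace = (Λ * ((1 + G)⁻¹ * G)).trace := by
    have e1 : Sig * X * Ψ * Sy⁻¹ * Ψᴴ * Xᴴ * Sig
        = U * (Λ * W * Sy⁻¹ * (Wᴴ * Λ * Uᴴ)) := by
      calc Sig * X * Ψ * Sy⁻¹ * Ψᴴ * Xᴴ * Sig
          = (Sig * X * Ψ) * Sy⁻¹ * (Ψᴴ * Xᴴ * Sig) := by simp only [Matrix.mul_assoc]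
        _ = U * (Λ * W) * Sy⁻¹ * (Wᴴ * Λ * Uᴴ) := by rw [hSXP, hPXS]
        _ = U * (Λ * W * Sy⁻¹ * (Wᴴ * Λ * Uᴴ)) := by simp only [Matrix.mul_assoc]
    rw [e1, Matrix.trace_mul_comm]
    have e2 : Λ * W * Sy⁻¹ * (Wᴴ * Λ * Uᴴ) * U = Λ * W * Sy⁻¹ * (Wᴴ * Λ) := by
      rw [Matrix.mul_assoc (Λ * W * Sy⁻¹) (Wᴴ * Λ * Uᴴ) U,
        Matrix.mul_assoc (Wᴴ * Λ) Uᴴ U, hU, Matrix.mul_one]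
    have e3 : Λ * W * Sy⁻¹ * (Wᴴ * Λ) = L12 * (L12 * W * Sy⁻¹ * Wᴴ * L12) * L12 := by
      rw [← hLL]
      simp only [Matrix.mul_assoc]
    rw [e2, e3, hkey, Matrix.trace_mul_cycle, hLL]
  have hfinal : Λ * (1 + G)⁻¹ = Λ - Λ * ((1 + G)⁻¹ * G) := by
    have h3 : (1 + G)⁻¹ + (1 + G)⁻¹ * G = 1 := by
      have h4 := hIGinv
      rwa [Matrix.mul_add, Matrix.mul_one] at h4
    calc Λ * (1 + G)⁻¹
        = Λ * ((1 + G)⁻¹ + (1 + G)⁻¹ * G) - Λ * ((1 + G)⁻¹ * G) := by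
          rw [Matrix.mul_add]; abel
      _ = Λ - Λ * ((1 + G)⁻¹ * G) := by rw [h3, Matrix.mul_one]
  rw [Matrix.trace_sub, htr1, hfinal, Matrix.trace_sub, htr2]
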